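/- Let H be a hyperbolic group with finite generating set A and word metric d_A, and let φ : H → H be an endomorphism. Then the following are equivalent: (i) the BRP holds for φ, i.e., for every p ≥ 0 there exists q ≥ 0 such that for all u, v ∈ H, (u|v) ≤ p implies (φ(u)|φ(v)) ≤ q; (ii) there exists N ≥ 0 such that for all x, y ∈ H, every discrete geodesic α from x to y and every discrete geodesic ξ from φ(x) to φ(y), the Hausdorff distance between the set φ(image of α) and the image of ξ is at most N; (iii) there exists N ≥ 0 such that for all x, y ∈ H, every discrete geodesic α from x to y and every discrete geodesic ξ from φ(x) to φ(y), the set φ(image of α) is contained in the closed N-neighbourhood of the image of ξ. -/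

import Mathlib

namespace Paper

variable {H : Type*} [Group H]

/-- `g` can be written as a product of `n` elements of `A ∪ A⁻¹`. -/
def WordWitness (A : Set H) (g : H) (n : ℕ) : Prop :=
  ∃ l : List H, l.length = n ∧ (∀ x ∈ l, x ∈ A ∨ x⁻¹ ∈ A) ∧ l.prod = g

/-- The word metric on `H` with respect to the generating set `A`. -/
noncomputable def wd (A : Set H) (g h : H) : ℕ :=
  sInf {n | WordWitness A (g⁻¹ * h) n}

/-- The Gromov product `(u|v)_w` with respect to the word metric for `A`. -/
noncomputable def gp (A : Set H) (w u v : H) : ℝ :=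
  ((wd A w u : ℝ) + (wd A w v : ℝ) - (wd A u v : ℝ)) / 2

/-- A discrete geodesic `γ : {0,…,n} → H` from `x` to `y` for the word metric of `A`. -/
def IsDiscreteGeodesic (A : Set H) (n : ℕ) (γ : ℕ → H) (x y : H) : Prop :=
  γ 0 = x ∧ γ n = y ∧
    ∀ i, i ≤ n → ∀ j, j ≤ n → (wd A (γ i) (γ j) : ℤ) = |(i : ℤ) - (j : ℤ)|

/-- `H` is hyperbolic with respect to `A`: some `δ ≥ 0` satisfies the Rips thin-triangles
condition for discrete geodesics (all three sides are covered since `x, y, z` and the three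
geodesics are universally quantified, and hence may be cyclically permuted). -/
def IsHyperbolic (A : Set H) : Prop :=
  ∃ δ : ℝ, 0 ≤ δ ∧ ∀ x y z : H, ∀ n₁ n₂ n₃ : ℕ, ∀ α β γ : ℕ → H,
    IsDiscreteGeodesic A n₁ α x y → IsDiscreteGeodesic A n₂ β y z →
    IsDiscreteGeodesic A n₃ γ z x → ∀ i, i ≤ n₁ →
      ∃ j, (j ≤ n₂ ∧ (wd A (α i) (β j) : ℝ) ≤ δ) ∨
           (j ≤ n₃ ∧ (wd A (α i) (γ j) : ℝ) ≤ δ)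

/-- The bounded reduction property for `φ`, in its Gromov-product formulation:
for every `p ≥ 0` there is `q ≥ 0` such that `(u|v) ≤ p` implies `(φ(u)|φ(v)) ≤ q`. -/
def BRP (A : Set H) (φ : H →* H) : Prop :=
  ∀ p : ℝ, 0 ≤ p → ∃ q : ℝ, 0 ≤ q ∧
    ∀ u v : H, gp A 1 u v ≤ p → gp A 1 (φ u) (φ v) ≤ q

/-! ### Auxiliary lemmas on word witnesses and the word metric -/

section Aux

variable {A : Set H}

lemma ww_mul {g h : H} {m n : ℕ} (hg : WordWitness A g m) (hh : WordWitness A h n) :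
    WordWitness A (g * h) (m + n) := by
  obtain ⟨l, hl, hmem, hp⟩ := hg
  obtain ⟨l', hl', hmem', hp'⟩ := hh
  refine ⟨l ++ l', by simp [hl, hl'], ?_, by simp [hp, hp']⟩
  intro x hx
  rcases List.mem_append.1 hx with h | h
  exacts [hmem x h, hmem' x h]

lemma ww_inv {g : H} {n : ℕ} (hg : WordWitness A g n) : WordWitness A g⁻¹ n := by
  obtain ⟨l, hl, hmem, hp⟩ := hg
  refine ⟨(l.map fun x => x⁻¹).reverse, by simp [hl], ?_, ?_⟩
  · intro x hx
    simp only [List.mem_reverse, List.mem_map] at hx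
    obtain ⟨a, ha, rfl⟩ := hx
    rcases hmem a ha with h | h
    · right; simpa using h
    · left; exact h
  · rw [← hp, ← List.prod_inv_reverse]

lemma ww_exists (hgen : Subgroup.closure A = ⊤) (g : H) : ∃ n, WordWitness A g n := by
  have hg : g ∈ Subgroup.closure A := by rw [hgen]; exact Subgroup.mem_top g
  induction hg using Subgroup.closure_induction with
  | mem a ha => exact ⟨1, [a], rfl, by simpa using Or.inl ha, by simp⟩
  | one => exact ⟨0, [], rfl, by simp, rfl⟩
  | mul a b _ _ iha ihb =>
      obtain ⟨m, hm⟩ := iha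
      obtain ⟨n, hn⟩ := ihb
      exact ⟨m + n, ww_mul hm hn⟩
  | inv a _ iha =>
      obtain ⟨n, hn⟩ := iha
      exact ⟨n, ww_inv hn⟩

lemma wd_le {g h : H} {n : ℕ} (hw : WordWitness A (g⁻¹ * h) n) : wd A g h ≤ n :=
  Nat.sInf_le hw

lemma wd_spec (hgen : Subgroup.closure A = ⊤) (g h : H) :
    WordWitness A (g⁻¹ * h) (wd A g h) :=
  Nat.sInf_mem (ww_exists hgen (g⁻¹ * h))

lemma wd_self (g : H) : wd A g g = 0 :=
  Nat.le_zero.1 (wd_le ⟨[], rfl, by simp, by simp⟩)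

lemma wd_eq_of_eq {g h g' h' : H} (e : g⁻¹ * h = g'⁻¹ * h') : wd A g h = wd A g' h' := by
  unfold wd; rw [e]

lemma wd_symm (g h : H) : wd A g h = wd A h g := by
  unfold wd
  congr 1
  ext n
  constructor
  · intro hw; simpa using ww_inv hw
  · intro hw; simpa using ww_inv hw

lemma wd_left (k g h : H) : wd A (k * g) (k * h) = wd A g h :=
  wd_eq_of_eq (by group)

lemma wd_triangle (hgen : Subgroup.closure A = ⊤) (g h k : H) :
    wd A g k ≤ wd A g h + wd A h k := by
  have := ww_mul (wd_spec (A := A) hgen g h) (wd_spec (A := A) hgen h k)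
  refine wd_le ?_
  simpa [mul_assoc] using this

lemma wd_triR (hgen : Subgroup.closure A = ⊤) (g h k : H) :
    (wd A g k : ℝ) ≤ (wd A g h : ℝ) + (wd A h k : ℝ) := by
  exact_mod_cast wd_triangle hgen g h k

lemma wd_symmR (g h : H) : (wd A g h : ℝ) = (wd A h g : ℝ) := by
  exact_mod_cast wd_symm (A := A) g h

/-- Distances along a discrete geodesic, real-valued version. -/
lemma geo_wdR {n : ℕ} {γ : ℕ → H} {x y : H} (hγ : IsDiscreteGeodesic A n γ x y)
    {i j : ℕ} (hi : i ≤ n) (hj : j ≤ n) (hij : i ≤ j) :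
    (wd A (γ i) (γ j) : ℝ) = (j : ℝ) - (i : ℝ) := by
  have h := hγ.2.2 i hi j hj
  have h2 : (wd A (γ i) (γ j) : ℤ) = (j : ℤ) - (i : ℤ) := by
    rw [h, abs_sub_comm, abs_of_nonneg] ; omega
  exact_mod_cast h2

/-- Existence of discrete geodesics. -/
lemma exists_geodesic (hgen : Subgroup.closure A = ⊤) (x y : H) :
    ∃ γ : ℕ → H, IsDiscreteGeodesic A (wd A x y) γ x y := by
  obtain ⟨l, hlen, hmem, hprod⟩ := wd_spec (A := A) hgen x y
  set n := wd A x y with hn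
  refine ⟨fun i => x * (l.take i).prod, by simp, ?_, ?_⟩
  · simp only
    rw [List.take_of_length_le (le_of_eq hlen), hprod, mul_inv_cancel_left]
  · -- the geodesic condition
    have key : ∀ i j, i ≤ j → j ≤ n →
        wd A (x * (l.take i).prod) (x * (l.take j).prod) ≤ j - i := by
      intro i j hij hjn
      rw [wd_left]
      refine wd_le ⟨(l.drop i).take (j - i), ?_, ?_, ?_⟩
      · rw [List.length_take, List.length_drop, hlen]
        omega
      · intro z hz
        exact hmem z (List.mem_of_mem_drop (List.mem_of_mem_take hz))
      · have : l.take j = l.take i ++ (l.drop i).take (j - i) := by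
          rw [← List.take_add, Nat.add_sub_cancel' hij]
        rw [this, List.prod_append, ← mul_assoc, inv_mul_cancel, one_mul]
    have keyeq : ∀ i j, i ≤ j → j ≤ n →
        wd A (x * (l.take i).prod) (x * (l.take j).prod) = j - i := by
      intro i j hij hjn
      refine le_antisymm (key i j hij hjn) ?_
      have hNn : x * (l.take n).prod = y := by
        rw [List.take_of_length_le (le_of_eq hlen), hprod, mul_inv_cancel_left]
      have h1 : wd A x (x * (l.take i).prod) ≤ i := by
        have := key 0 i (Nat.zero_le i) (le_trans hij hjn)
        simpa using this
      have h2 : wd A (x * (l.take j).prod) y ≤ n - j := by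
        have := key j n hjn le_rfl
        rwa [hNn] at this
      have htr : n ≤ i + (wd A (x * (l.take i).prod) (x * (l.take j).prod) + (n - j)) := by
        calc n = wd A x y := hn
        _ ≤ wd A x (x * (l.take i).prod) + wd A (x * (l.take i).prod) y :=
            wd_triangle hgen _ _ _
        _ ≤ wd A x (x * (l.take i).prod) +
              (wd A (x * (l.take i).prod) (x * (l.take j).prod) +
                wd A (x * (l.take j).prod) y) := by
            gcongr
            exact wd_triangle hgen _ _ _
        _ ≤ i + (wd A (x * (l.take i).prod) (x * (l.take j).prod) + (n - j)) := by
            gcongr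
      omega
    intro i hi j hj
    rcases le_total i j with hij | hji
    · have := keyeq i j hij hj
      simp only at this ⊢
      rw [this, abs_sub_comm, abs_of_nonneg (by omega : (0:ℤ) ≤ (j:ℤ) - (i:ℤ))]
      omega
    · have := keyeq j i hji hi
      simp only at this ⊢
      rw [wd_symm, this, abs_of_nonneg (by omega : (0:ℤ) ≤ (i:ℤ) - (j:ℤ))]
      omega

/-- `φ` is Lipschitz for the word metric. -/
lemma lipschitz (hA : A.Finite) (hgen : Subgroup.closure A = ⊤) (φ : H →* H) :
    ∃ C : ℕ, ∀ g h : H, wd A (φ g) (φ h) ≤ C * wd A g h := by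
  classical
  set C : ℕ := hA.toFinset.sup fun a => wd A 1 (φ a) with hC
  have hone : ∀ g : H, wd A 1 g⁻¹ = wd A 1 g := by
    intro g
    rw [wd_symm]
    exact wd_eq_of_eq (by group)
  have hgenC : ∀ a : H, a ∈ A ∨ a⁻¹ ∈ A → wd A 1 (φ a) ≤ C := by
    rintro a (ha | ha)
    · exact Finset.le_sup (f := fun a => wd A 1 (φ a)) (hA.mem_toFinset.2 ha)
    · have : wd A 1 (φ a⁻¹) ≤ C :=
        Finset.le_sup (f := fun a => wd A 1 (φ a)) (hA.mem_toFinset.2 ha)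
      rwa [map_inv, hone] at this
  have main : ∀ l : List H, (∀ z ∈ l, z ∈ A ∨ z⁻¹ ∈ A) →
      wd A 1 (φ l.prod) ≤ C * l.length := by
    intro l
    induction l with
    | nil => intro _; simp [wd_self]
    | cons a l ih =>
        intro hm
        have h1 : wd A 1 (φ (a :: l).prod) ≤ wd A 1 (φ a) + wd A (φ a) (φ a * φ l.prod) := by
          have := wd_triangle (A := A) hgen 1 (φ a) (φ a * φ l.prod)
          simpa [List.prod_cons, map_mul] using this
        have h2 : wd A (φ a) (φ a * φ l.prod) = wd A 1 (φ l.prod) := by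
          have := wd_left (A := A) (φ a) 1 (φ l.prod)
          simpa using this
        have h3 : wd A 1 (φ a) ≤ C := hgenC a (hm a List.mem_cons_self)
        have h4 : wd A 1 (φ l.prod) ≤ C * l.length :=
          ih fun z hz => hm z (List.mem_cons_of_mem a hz)
        calc wd A 1 (φ (a :: l).prod) ≤ wd A 1 (φ a) + wd A 1 (φ l.prod) := by
              rw [← h2]; exact h1
        _ ≤ C + C * l.length := Nat.add_le_add h3 h4
        _ = C * (a :: l).length := by simp [List.length_cons]; ring
  refine ⟨C, fun g h => ?_⟩
  obtain ⟨l, hlen, hmem, hprod⟩ := wd_spec (A := A) hgen g h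
  have e1 : wd A (φ g) (φ h) = wd A 1 (φ l.prod) := by
    rw [hprod, map_mul, map_inv]
    exact wd_eq_of_eq (by group)
  rw [e1, ← hlen]
  exact main l hmem

/-- The Gromov product is bounded by the distance to any point on a geodesic. -/
lemma gp_le_point (hgen : Subgroup.closure A = ⊤) {x y p : H}
    (hsum : (wd A x p : ℝ) + (wd A p y : ℝ) = (wd A x y : ℝ)) (w : H) :
    gp A w x y ≤ (wd A w p : ℝ) := by
  have h1 := wd_triR (A := A) hgen w p x
  have h2 := wd_triR (A := A) hgen w p y
  have h3 : (wd A p x : ℝ) = (wd A x p : ℝ) := wd_symmR _ _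
  unfold gp
  linarith

lemma gp_conj (w u v : H) : gp A 1 (w⁻¹ * u) (w⁻¹ * v) = gp A w u v := by
  have e1 : wd A 1 (w⁻¹ * u) = wd A w u := wd_eq_of_eq (by group)
  have e2 : wd A 1 (w⁻¹ * v) = wd A w v := wd_eq_of_eq (by group)
  have e3 : wd A (w⁻¹ * u) (w⁻¹ * v) = wd A u v := wd_eq_of_eq (by group)
  unfold gp
  rw [e1, e2, e3]

/-- In a hyperbolic group, every point is close to any geodesic, up to the Gromov
product of the endpoints. -/
lemma exists_close_point (hgen : Subgroup.closure A = ⊤) {δ : ℝ} (hδ : 0 ≤ δ)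
    (hR : ∀ x y z : H, ∀ n₁ n₂ n₃ : ℕ, ∀ α β γ : ℕ → H,
      IsDiscreteGeodesic A n₁ α x y → IsDiscreteGeodesic A n₂ β y z →
      IsDiscreteGeodesic A n₃ γ z x → ∀ i, i ≤ n₁ →
        ∃ j, (j ≤ n₂ ∧ (wd A (α i) (β j) : ℝ) ≤ δ) ∨
             (j ≤ n₃ ∧ (wd A (α i) (γ j) : ℝ) ≤ δ))
    {x y : H} {m : ℕ} {ξ : ℕ → H} (hξ : IsDiscreteGeodesic A m ξ x y) (w : H) :
    ∃ i, i ≤ m ∧ (wd A w (ξ i) : ℝ) ≤ gp A w x y + 2 * δ + 1 := by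
  classical
  obtain ⟨β, hβ⟩ := exists_geodesic (A := A) hgen y w
  obtain ⟨γ, hγ⟩ := exists_geodesic (A := A) hgen w x
  set n₂ := wd A y w
  set n₃ := wd A w x
  have hrips := hR x y w m n₂ n₃ ξ β γ hξ hβ hγ
  set P : ℕ → Prop := fun i => i ≤ m ∧ ∃ j, j ≤ n₃ ∧ (wd A (ξ i) (γ j) : ℝ) ≤ δ with hP
  have hP0 : P 0 := by
    refine ⟨Nat.zero_le m, n₃, le_rfl, ?_⟩
    rw [hξ.1, ← hγ.2.1, wd_self]
    simpa using hδ
  set i₀ := Nat.findGreatest P m with hi₀def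
  have hPi₀ : P i₀ := Nat.findGreatest_spec (Nat.zero_le m) hP0
  obtain ⟨hi₀m, j₁, hj₁, hd₁⟩ := hPi₀
  -- a nearby point close to β
  have hnext : ∃ i', i₀ ≤ i' ∧ i' ≤ m ∧ i' ≤ i₀ + 1 ∧
      ∃ j₂, j₂ ≤ n₂ ∧ (wd A (ξ i') (β j₂) : ℝ) ≤ δ := by
    by_cases hcase : i₀ = m
    · refine ⟨m, le_of_eq hcase, le_rfl, by omega, 0, Nat.zero_le _, ?_⟩
      rw [hξ.2.1, ← hβ.1, wd_self]
      simpa using hδ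
    · have hi₁ : i₀ + 1 ≤ m := by omega
      obtain ⟨j, hj⟩ := hrips (i₀ + 1) hi₁
      rcases hj with ⟨hjn, hjd⟩ | ⟨hjn, hjd⟩
      · exact ⟨i₀ + 1, by omega, hi₁, le_rfl, j, hjn, hjd⟩
      · exfalso
        have := Nat.findGreatest_is_greatest (P := P) (by omega : i₀ < i₀ + 1) hi₁
        exact this ⟨hi₁, j, hjn, hjd⟩
  obtain ⟨i', hi'l, hi'm, hi'u, j₂, hj₂, hd₂⟩ := hnext
  refine ⟨i₀, hi₀m, ?_⟩
  -- collect distance facts (real-valued)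
  have F1 : (wd A w (γ j₁) : ℝ) = (j₁ : ℝ) := by
    have := geo_wdR (A := A) hγ (Nat.zero_le n₃) hj₁ (Nat.zero_le j₁)
    rw [hγ.1] at this
    simpa using this
  have F2 : (wd A (γ j₁) x : ℝ) = (n₃ : ℝ) - (j₁ : ℝ) := by
    have := geo_wdR (A := A) hγ hj₁ le_rfl hj₁
    rwa [hγ.2.1] at this
  have F3 : (wd A w x : ℝ) = (n₃ : ℝ) := rfl
  have F4 : (wd A (β j₂) w : ℝ) = (n₂ : ℝ) - (j₂ : ℝ) := by
    have := geo_wdR (A := A) hβ hj₂ le_rfl hj₂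
    rwa [hβ.2.1] at this
  have F5 : (wd A y (β j₂) : ℝ) = (j₂ : ℝ) := by
    have := geo_wdR (A := A) hβ (Nat.zero_le n₂) hj₂ (Nat.zero_le j₂)
    rw [hβ.1] at this
    simpa using this
  have F6 : (wd A x (ξ i₀) : ℝ) = (i₀ : ℝ) := by
    have := geo_wdR (A := A) hξ (Nat.zero_le m) hi₀m (Nat.zero_le i₀)
    rw [hξ.1] at this
    simpa using this
  have F7 : (wd A (ξ i') y : ℝ) = (m : ℝ) - (i' : ℝ) := by
    have := geo_wdR (A := A) hξ hi'm le_rfl hi'm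
    rwa [hξ.2.1] at this
  have F8 : (wd A x y : ℝ) = (m : ℝ) := by
    have := geo_wdR (A := A) hξ (Nat.zero_le m) le_rfl (Nat.zero_le m)
    rw [hξ.1, hξ.2.1] at this
    simpa using this
  have F9 : (wd A (ξ i₀) (ξ i') : ℝ) = (i' : ℝ) - (i₀ : ℝ) :=
    geo_wdR (A := A) hξ hi₀m hi'm hi'l
  have Fwy : (wd A w y : ℝ) = (n₂ : ℝ) := by rw [wd_symmR]
  -- chain of estimates
  have a1 : (wd A w (ξ i₀) : ℝ) ≤ (j₁ : ℝ) + δ := by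
    have t := wd_triR (A := A) hgen w (γ j₁) (ξ i₀)
    have : (wd A (γ j₁) (ξ i₀) : ℝ) ≤ δ := by rw [wd_symmR]; exact hd₁
    linarith [t, F1]
  have a2 : (i₀ : ℝ) ≤ ((n₃ : ℝ) - (j₁ : ℝ)) + δ := by
    have t := wd_triR (A := A) hgen x (γ j₁) (ξ i₀)
    have h' : (wd A (γ j₁) (ξ i₀) : ℝ) ≤ δ := by rw [wd_symmR]; exact hd₁
    have hx : (wd A x (γ j₁) : ℝ) = (n₃ : ℝ) - (j₁ : ℝ) := by rw [wd_symmR]; exact F2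
    linarith [t, F6]
  have b1 : (wd A w (ξ i₀) : ℝ) ≤ ((n₂ : ℝ) - (j₂ : ℝ)) + δ + 1 := by
    have t1 := wd_triR (A := A) hgen w (β j₂) (ξ i')
    have t2 := wd_triR (A := A) hgen w (ξ i') (ξ i₀)
    have hwβ : (wd A w (β j₂) : ℝ) = (n₂ : ℝ) - (j₂ : ℝ) := by rw [wd_symmR]; exact F4
    have hβξ : (wd A (β j₂) (ξ i') : ℝ) ≤ δ := by rw [wd_symmR]; exact hd₂
    have hξξ : (wd A (ξ i') (ξ i₀) : ℝ) ≤ 1 := by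
      rw [wd_symmR, F9]
      have : (i' : ℝ) ≤ (i₀ : ℝ) + 1 := by exact_mod_cast hi'u
      linarith
    linarith
  have b2 : (m : ℝ) - (i' : ℝ) ≤ δ + (j₂ : ℝ) := by
    have t := wd_triR (A := A) hgen (ξ i') (β j₂) y
    have hy : (wd A (β j₂) y : ℝ) = (j₂ : ℝ) := by rw [wd_symmR]; exact F5
    linarith [t, F7, hd₂]
  have hii' : (i₀ : ℝ) ≤ (i' : ℝ) := by exact_mod_cast hi'l
  have hiu : (i' : ℝ) ≤ (i₀ : ℝ) + 1 := by exact_mod_cast hi'u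
  have hgpval : gp A w x y = ((n₃ : ℝ) + (n₂ : ℝ) - (m : ℝ)) / 2 := by
    unfold gp
    rw [F3, Fwy, F8]
  rw [hgpval]
  linarith

end Aux

/-! ### The main implications -/

section Main

variable {A : Set H}

/-- BRP implies both neighbourhood conditions (the Hausdorff-distance formulation). -/
lemma brp_to_hausdorff (hA : A.Finite) (hgen : Subgroup.closure A = ⊤)
    (hhyp : IsHyperbolic A) (φ : H →* H) (hbrp : BRP A φ) :
    ∃ N : ℝ, 0 ≤ N ∧ ∀ x y : H, ∀ n m : ℕ, ∀ α ξ : ℕ → H,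
      IsDiscreteGeodesic A n α x y → IsDiscreteGeodesic A m ξ (φ x) (φ y) →
      (∀ i, i ≤ n → ∃ j, j ≤ m ∧ (wd A (φ (α i)) (ξ j) : ℝ) ≤ N) ∧
      (∀ j, j ≤ m → ∃ i, i ≤ n ∧ (wd A (ξ j) (φ (α i)) : ℝ) ≤ N) := by
  classical
  obtain ⟨δ, hδ, hR⟩ := hhyp
  obtain ⟨C, hC⟩ := lipschitz hA hgen φ
  obtain ⟨q, hq, hq'⟩ := hbrp 0 le_rfl
  set N₀ : ℝ := q + 2 * δ + 1 with hN₀def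
  have hN₀ : 0 ≤ N₀ := by positivity
  -- first: image of α is in the N₀-neighbourhood of ξ
  have first : ∀ x y : H, ∀ n m : ℕ, ∀ α ξ : ℕ → H,
      IsDiscreteGeodesic A n α x y → IsDiscreteGeodesic A m ξ (φ x) (φ y) →
      ∀ i, i ≤ n → ∃ j, j ≤ m ∧ (wd A (φ (α i)) (ξ j) : ℝ) ≤ N₀ := by
    intro x y n m α ξ hα hξ i hi
    have h0 : gp A 1 ((α i)⁻¹ * x) ((α i)⁻¹ * y) ≤ 0 := by
      rw [gp_conj]
      have e1 : (wd A (α i) x : ℝ) = (i : ℝ) := by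
        rw [wd_symmR]
        have := geo_wdR (A := A) hα (Nat.zero_le n) hi (Nat.zero_le i)
        rw [hα.1] at this; simpa using this
      have e2 : (wd A (α i) y : ℝ) = (n : ℝ) - (i : ℝ) := by
        have := geo_wdR (A := A) hα hi le_rfl hi
        rwa [hα.2.1] at this
      have e3 : (wd A x y : ℝ) = (n : ℝ) := by
        have := geo_wdR (A := A) hα (Nat.zero_le n) le_rfl (Nat.zero_le n)
        rw [hα.1, hα.2.1] at this; simpa using this
      unfold gp
      rw [e1, e2, e3]
      linarith
    have hq2 := hq' _ _ h0
    have hgpq : gp A (φ (α i)) (φ x) (φ y) ≤ q := by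
      have e : gp A 1 (φ ((α i)⁻¹ * x)) (φ ((α i)⁻¹ * y)) =
          gp A (φ (α i)) (φ x) (φ y) := by
        rw [map_mul, map_mul, map_inv, gp_conj]
      rwa [e] at hq2
    obtain ⟨j, hj, hjd⟩ := exists_close_point (A := A) hgen hδ hR hξ (φ (α i))
    exact ⟨j, hj, by rw [hN₀def]; linarith⟩
  set N : ℝ := 3 * N₀ + C with hNdef
  have hCR : (0:ℝ) ≤ (C : ℝ) := Nat.cast_nonneg C
  have hN : 0 ≤ N := by rw [hNdef]; linarith
  have hN₀N : N₀ ≤ N := by rw [hNdef]; linarith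
  refine ⟨N, hN, fun x y n m α ξ hα hξ => ?_⟩
  have hfirst := first x y n m α ξ hα hξ
  constructor
  · intro i hi
    obtain ⟨j, hj, hjd⟩ := hfirst i hi
    exact ⟨j, hj, le_trans hjd hN₀N⟩
  · -- second part: coarse connectivity
    intro k hk
    -- choose the nearby indices
    have hch : ∀ i : ℕ, ∃ j : ℕ, i ≤ n → j ≤ m ∧ (wd A (φ (α i)) (ξ j) : ℝ) ≤ N₀ := by
      intro i
      by_cases hi : i ≤ n
      · obtain ⟨j, hj⟩ := hfirst i hi
        exact ⟨j, fun _ => hj⟩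
      · exact ⟨0, fun h => absurd h hi⟩
    choose J hJ using hch
    set P : ℕ → Prop := fun i => i ≤ n ∧ J i ≤ k with hPdef
    by_cases hP0 : P 0
    · set i₀ := Nat.findGreatest P n with hi₀def
      have hPi₀ : P i₀ := Nat.findGreatest_spec (Nat.zero_le n) hP0
      obtain ⟨hi₀n, hJi₀⟩ := hPi₀
      obtain ⟨hJm, hJd⟩ := hJ i₀ hi₀n
      have hξJk : (wd A (ξ k) (ξ (J i₀)) : ℝ) = (k : ℝ) - (J i₀ : ℝ) := by
        rw [wd_symmR]
        exact geo_wdR (A := A) hξ hJm hk hJi₀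
      by_cases hcase : i₀ = n
      · -- endpoint case: ξ m = φ (α n)
        have hend' : φ (α i₀) = ξ m := by rw [hcase, hα.2.1, ← hξ.2.1]
        have hJm' : (wd A (ξ (J i₀)) (ξ m) : ℝ) = (m : ℝ) - (J i₀ : ℝ) :=
          geo_wdR (A := A) hξ hJm le_rfl hJm
        have hJN : (m : ℝ) - (J i₀ : ℝ) ≤ N₀ := by
          rw [← hJm']
          calc (wd A (ξ (J i₀)) (ξ m) : ℝ)
              = (wd A (φ (α i₀)) (ξ (J i₀)) : ℝ) := by rw [← hend', wd_symmR]
            _ ≤ N₀ := hJd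
        have hkm : (wd A (ξ k) (ξ m) : ℝ) = (m : ℝ) - (k : ℝ) :=
          geo_wdR (A := A) hξ hk le_rfl hk
        have hkJ : (J i₀ : ℝ) ≤ (k : ℝ) := by exact_mod_cast hJi₀
        have hfin : (wd A (ξ k) (φ (α i₀)) : ℝ) ≤ N₀ := by
          rw [hend', hkm]
          linarith
        exact ⟨i₀, hi₀n, le_trans hfin hN₀N⟩
      · -- interior case
        have hi₁ : i₀ + 1 ≤ n := by omega
        have hnP : ¬ P (i₀ + 1) :=
          Nat.findGreatest_is_greatest (by omega : i₀ < i₀ + 1) hi₁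
        have hkJ1 : k < J (i₀ + 1) := by
          by_contra hcon
          exact hnP ⟨hi₁, by omega⟩
        obtain ⟨hJm1, hJd1⟩ := hJ (i₀ + 1) hi₁
        -- |J(i₀+1) - J(i₀)| ≤ 2N₀ + C
        have hstep : (wd A (α i₀) (α (i₀ + 1)) : ℝ) = 1 := by
          have := geo_wdR (A := A) hα (by omega : i₀ ≤ n) hi₁ (by omega)
          rw [this]; push_cast; ring
        have hstepφ : (wd A (φ (α i₀)) (φ (α (i₀ + 1))) : ℝ) ≤ (C : ℝ) := by
          have h1 := hC (α i₀) (α (i₀ + 1))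
          have h2 : wd A (α i₀) (α (i₀ + 1)) = 1 := by exact_mod_cast hstep
          rw [h2, mul_one] at h1
          exact_mod_cast h1
        have hJdiff : (wd A (ξ (J i₀)) (ξ (J (i₀ + 1))) : ℝ) =
            (J (i₀ + 1) : ℝ) - (J i₀ : ℝ) :=
          geo_wdR (A := A) hξ hJm hJm1 (by omega)
        have htr : (wd A (ξ (J i₀)) (ξ (J (i₀ + 1))) : ℝ) ≤ N₀ + (C : ℝ) + N₀ := by
          have t1 := wd_triR (A := A) hgen (ξ (J i₀)) (φ (α i₀)) (ξ (J (i₀ + 1)))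
          have t2 := wd_triR (A := A) hgen (φ (α i₀)) (φ (α (i₀ + 1))) (ξ (J (i₀ + 1)))
          have s1 : (wd A (ξ (J i₀)) (φ (α i₀)) : ℝ) ≤ N₀ := by rw [wd_symmR]; exact hJd
          linarith
        refine ⟨i₀, hi₀n, ?_⟩
        have t := wd_triR (A := A) hgen (ξ k) (ξ (J i₀)) (φ (α i₀))
        have hkJR : (J i₀ : ℝ) ≤ (k : ℝ) := by exact_mod_cast hJi₀
        have hkJ1R : (k : ℝ) < (J (i₀ + 1) : ℝ) := by exact_mod_cast hkJ1
        rw [hNdef]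
        have s1 : (wd A (ξ (J i₀)) (φ (α i₀)) : ℝ) ≤ N₀ := by rw [wd_symmR]; exact hJd
        have : (k : ℝ) - (J i₀ : ℝ) ≤ 2 * N₀ + (C : ℝ) := by
          rw [hJdiff] at htr
          linarith
        rw [hξJk] at t
        linarith
    · -- k is within N₀ of ξ 0 = φ (α 0)
      refine ⟨0, Nat.zero_le n, ?_⟩
      have hJ0 : P 0 ↔ J 0 ≤ k := by
        constructor
        · intro h; exact h.2
        · intro h; exact ⟨Nat.zero_le n, h⟩
      have hkJ0 : k < J 0 := by
        by_contra hcon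
        exact hP0 (hJ0.2 (by omega))
      obtain ⟨hJ0m, hJ0d⟩ := hJ 0 (Nat.zero_le n)
      have hstart : φ (α 0) = ξ 0 := by rw [hα.1, ← hξ.1]
      have e1 : (wd A (ξ 0) (ξ (J 0)) : ℝ) = (J 0 : ℝ) :=
        by simpa using geo_wdR (A := A) hξ (Nat.zero_le m) hJ0m (Nat.zero_le (J 0))
      have e2 : (wd A (ξ k) (ξ 0) : ℝ) = (k : ℝ) := by
        rw [wd_symmR]
        simpa using geo_wdR (A := A) hξ (Nat.zero_le m) hk (Nat.zero_le k)
      have hJ0N : (J 0 : ℝ) ≤ N₀ := by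
        rw [← e1, ← hstart]
        exact hJ0d
      have : (wd A (ξ k) (φ (α 0)) : ℝ) = (k : ℝ) := by rw [hstart]; exact e2
      rw [this]
      have : (k : ℝ) < (J 0 : ℝ) := by exact_mod_cast hkJ0
      linarith

/-- The neighbourhood condition implies BRP. -/
lemma nbhd_to_brp (hA : A.Finite) (hgen : Subgroup.closure A = ⊤)
    (hhyp : IsHyperbolic A) (φ : H →* H)
    (hnb : ∃ N : ℝ, 0 ≤ N ∧ ∀ x y : H, ∀ n m : ℕ, ∀ α ξ : ℕ → H,
      IsDiscreteGeodesic A n α x y → IsDiscreteGeodesic A m ξ (φ x) (φ y) →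
      ∀ i, i ≤ n → ∃ j, j ≤ m ∧ (wd A (φ (α i)) (ξ j) : ℝ) ≤ N) :
    BRP A φ := by
  obtain ⟨δ, hδ, hR⟩ := hhyp
  obtain ⟨C, hC⟩ := lipschitz hA hgen φ
  obtain ⟨N, hN, hcond⟩ := hnb
  intro p hp
  refine ⟨(C : ℝ) * (p + 2 * δ + 1) + N, by positivity, fun u v huv => ?_⟩
  obtain ⟨α, hα⟩ := exists_geodesic (A := A) hgen u v
  obtain ⟨ξ, hξ⟩ := exists_geodesic (A := A) hgen (φ u) (φ v)
  set n := wd A u v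
  set m := wd A (φ u) (φ v)
  obtain ⟨i, hi, hid⟩ := exists_close_point (A := A) hgen hδ hR hα (1 : H)
  obtain ⟨j, hj, hjd⟩ := hcond u v n m α ξ hα hξ i hi
  -- gp of images is at most distance from 1 to ξ j
  have hsum : (wd A (φ u) (ξ j) : ℝ) + (wd A (ξ j) (φ v) : ℝ) = (wd A (φ u) (φ v) : ℝ) := by
    have e1 : (wd A (φ u) (ξ j) : ℝ) = (j : ℝ) := by
      have := geo_wdR (A := A) hξ (Nat.zero_le m) hj (Nat.zero_le j)
      rw [hξ.1] at this; simpa using this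
    have e2 : (wd A (ξ j) (φ v) : ℝ) = (m : ℝ) - (j : ℝ) := by
      have := geo_wdR (A := A) hξ hj le_rfl hj
      rwa [hξ.2.1] at this
    have e3 : (wd A (φ u) (φ v) : ℝ) = (m : ℝ) := rfl
    rw [e1, e2, e3]; ring
  have hgple : gp A 1 (φ u) (φ v) ≤ (wd A 1 (ξ j) : ℝ) := gp_le_point hgen hsum 1
  have htr : (wd A 1 (ξ j) : ℝ) ≤ (wd A 1 (φ (α i)) : ℝ) + N := by
    have := wd_triR (A := A) hgen 1 (φ (α i)) (ξ j)
    linarith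
  have hlip : (wd A 1 (φ (α i)) : ℝ) ≤ (C : ℝ) * (wd A 1 (α i) : ℝ) := by
    have h1 := hC 1 (α i)
    rw [map_one] at h1
    exact_mod_cast h1
  have hαi : (wd A 1 (α i) : ℝ) ≤ p + 2 * δ + 1 := le_trans hid (by linarith)
  have hCR : (0:ℝ) ≤ (C : ℝ) := Nat.cast_nonneg C
  have : (C : ℝ) * (wd A 1 (α i) : ℝ) ≤ (C : ℝ) * (p + 2 * δ + 1) :=
    mul_le_mul_of_nonneg_left hαi hCR
  linarith

end Main

/-- Equivalence of the BRP with the Hausdorff-distance and neighbourhood formulations: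
the image under `φ` of a geodesic `[x,y]` is at uniformly bounded Hausdorff distance
from any geodesic `[φ(x),φ(y)]`, resp. lies in a uniform neighbourhood of it. -/
theorem brp_iff_hausdorff_iff_neighbourhood
    (A : Set H) (hA : A.Finite) (hgen : Subgroup.closure A = ⊤)
    (hhyp : IsHyperbolic A) (φ : H →* H) :
    (BRP A φ ↔
      (∃ N : ℝ, 0 ≤ N ∧ ∀ x y : H, ∀ n m : ℕ, ∀ α ξ : ℕ → H,
        IsDiscreteGeodesic A n α x y → IsDiscreteGeodesic A m ξ (φ x) (φ y) →
        (∀ i, i ≤ n → ∃ j, j ≤ m ∧ (wd A (φ (α i)) (ξ j) : ℝ) ≤ N) ∧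
        (∀ j, j ≤ m → ∃ i, i ≤ n ∧ (wd A (ξ j) (φ (α i)) : ℝ) ≤ N))) ∧
    (BRP A φ ↔
      (∃ N : ℝ, 0 ≤ N ∧ ∀ x y : H, ∀ n m : ℕ, ∀ α ξ : ℕ → H,
        IsDiscreteGeodesic A n α x y → IsDiscreteGeodesic A m ξ (φ x) (φ y) →
        ∀ i, i ≤ n → ∃ j, j ≤ m ∧ (wd A (φ (α i)) (ξ j) : ℝ) ≤ N)) := by
  constructor
  · constructor
    · intro hbrp
      exact brp_to_hausdorff hA hgen hhyp φ hbrp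
    · rintro ⟨N, hN, hcond⟩
      refine nbhd_to_brp hA hgen hhyp φ ⟨N, hN, fun x y n m α ξ hα hξ i hi => ?_⟩
      exact (hcond x y n m α ξ hα hξ).1 i hi
  · constructor
    · intro hbrp
      obtain ⟨N, hN, hcond⟩ := brp_to_hausdorff hA hgen hhyp φ hbrp
      exact ⟨N, hN, fun x y n m α ξ hα hξ => (hcond x y n m α ξ hα hξ).1⟩
    · exact nbhd_to_brp hA hgen hhyp φ

end Paper
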